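/- Let k ≥ 3 and let a be an integer with 0 ≤ a ≤ k−2. Then (k−2)·f(k+a−1) + (a+2)·f(k−2) ≤ (k−2−a)·f(k+a−1) + (a+1)·f(k−2+a) + a·f(k−1) + f(k−2−a), and the inequality is strict when a > 0. Equivalently, a·[f(k+a−1) − f(k+a−2) − f(k−1) + f(k−2)] ≤ f(k−2+a) + f(k−2−a) − 2·f(k−2), strict for a > 0. (This is the case m = C(k−2,2) + (a+2)(k−2) = C(k−1,2) + a(k−1) + (k−2−a) of the comparison h(C(m,k)) ≥ h(C(m,k−1)).) -/

import Mathlib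

/-- `f x = x * log x` (note `Real.log 0 = 0`, so `f 0 = 0`). -/
noncomputable def f (x : ℝ) : ℝ := x * Real.log x


/-- `D x = (x+1) log(x+1) - (x+1) log x` is strictly decreasing on `(0,∞)`. -/
lemma D_strictAnti :
    StrictAntiOn (fun x : ℝ => (x + 1) * Real.log (x + 1) - (x + 1) * Real.log x)
      (Set.Ioi 0) := by
  apply strictAntiOn_of_hasDerivWithinAt_neg (f' := fun x : ℝ =>
      Real.log (x + 1) - Real.log x - 1 / x) (convex_Ioi 0)
  · apply ContinuousOn.sub
    · apply ContinuousOn.mul (continuous_id.add continuous_const).continuousOn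
      apply Real.continuousOn_log.comp (continuous_id.add continuous_const).continuousOn
      intro x hx
      simp only [Set.mem_Ioi] at hx
      simp only [Set.mem_compl_iff, Set.mem_singleton_iff, id_eq]
      intro h; simp only [Pi.add_apply, id_eq] at h; linarith
    · apply ContinuousOn.mul (continuous_id.add continuous_const).continuousOn
      apply Real.continuousOn_log.mono
      intro x hx
      simp only [Set.mem_Ioi] at hx
      simp only [Set.mem_compl_iff, Set.mem_singleton_iff]
      intro h; linarith
  · intro x hx
    rw [interior_Ioi] at hx
    have hx0 : (0:ℝ) < x := hx
    have hx1 : (0:ℝ) < x + 1 := by linarith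
    have h1 : HasDerivAt (fun x : ℝ => x + 1) 1 x := (hasDerivAt_id x).add_const 1
    have hlog1 : HasDerivAt (fun x : ℝ => Real.log (x + 1)) ((x + 1)⁻¹ * 1) x :=
      by have := (Real.hasDerivAt_log hx1.ne').comp x h1; exact this
    have hlog : HasDerivAt Real.log x⁻¹ x := Real.hasDerivAt_log hx0.ne'
    have h := (h1.mul hlog1).sub (h1.mul hlog)
    have e : 1 * Real.log (x + 1) + (x + 1) * ((x + 1)⁻¹ * 1) -
        (1 * Real.log x + (x + 1) * x⁻¹) = Real.log (x + 1) - Real.log x - 1 / x := by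
      field_simp
      ring
    rw [e] at h
    exact h.hasDerivWithinAt
  · intro x hx
    rw [interior_Ioi] at hx
    have hx0 : (0:ℝ) < x := hx
    have h1 : Real.log ((x + 1) / x) < (x + 1) / x - 1 := by
      apply Real.log_lt_sub_one_of_pos (by positivity)
      intro h
      rw [div_eq_one_iff_eq (ne_of_gt hx0)] at h
      linarith
    rw [Real.log_div (by linarith) hx0.ne'] at h1
    have e : (x + 1) / x - 1 = 1 / x := by field_simp; ring
    rw [e] at h1
    linarith

/-- `ψ(a) = n log(n+a) + (n-a) log(n-a) - (2n-a) log n ≥ 0` for `0 ≤ a ≤ n`, `n ≥ 1`. -/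
lemma psi_nonneg (n a : ℝ) (hn : 1 ≤ n) (h0 : 0 ≤ a) (han : a ≤ n) :
    0 ≤ n * Real.log (n + a) + (n - a) * Real.log (n - a) - (2 * n - a) * Real.log n := by
  have hmono : MonotoneOn (fun s : ℝ =>
      n * Real.log (n + s) + (n - s) * Real.log (n - s) - (2 * n - s) * Real.log n)
      (Set.Icc 0 a) := by
    apply monotoneOn_of_hasDerivWithinAt_nonneg (f' := fun s : ℝ =>
      n * (n + s)⁻¹ - Real.log (n - s) - 1 + Real.log n) (convex_Icc 0 a)
    · apply ContinuousOn.sub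
      · apply ContinuousOn.add
        · apply ContinuousOn.mul continuousOn_const
          apply Real.continuousOn_log.comp (continuous_const.add continuous_id).continuousOn
          intro s hs
          simp only [Set.mem_Icc] at hs
          simp only [Set.mem_compl_iff, Set.mem_singleton_iff, id_eq]
          intro h; simp only [Pi.add_apply, id_eq] at h; linarith [hs.1]
        · exact ((Real.continuous_mul_log).comp (continuous_const.sub continuous_id)).continuousOn
      · exact (continuous_const.sub continuous_id).continuousOn.mul continuousOn_const
    · intro s hs
      rw [interior_Icc] at hs
      obtain ⟨hs0, hsa⟩ := hs
      have hns : (0:ℝ) < n - s := by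
        rcases lt_or_ge s n with h | h
        · linarith
        · linarith
      have hnps : (0:ℝ) < n + s := by linarith
      have hu : HasDerivAt (fun s : ℝ => n + s) 1 s := (hasDerivAt_id s).const_add n
      have hv : HasDerivAt (fun s : ℝ => n - s) (-1) s := (hasDerivAt_id s).const_sub n
      have hlog1 : HasDerivAt (fun s : ℝ => Real.log (n + s)) ((n + s)⁻¹ * 1) s :=
        by have := (Real.hasDerivAt_log hnps.ne').comp s hu; exact this
      have hlog2 : HasDerivAt (fun s : ℝ => Real.log (n - s)) ((n - s)⁻¹ * (-1)) s :=
        by have := (Real.hasDerivAt_log hns.ne').comp s hv; exact this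
      have hC : HasDerivAt (fun s : ℝ => (2 * n - s) * Real.log n) ((-1) * Real.log n) s :=
        ((hasDerivAt_id s).const_sub (2 * n)).mul_const _
      have h := ((hlog1.const_mul n).add (hv.mul hlog2)).sub hC
      have e : n * ((n + s)⁻¹ * 1) + (-1 * Real.log (n - s) + (n - s) * ((n - s)⁻¹ * (-1))) -
          -1 * Real.log n = n * (n + s)⁻¹ - Real.log (n - s) - 1 + Real.log n := by
        field_simp
        ring
      rw [e] at h
      exact h.hasDerivWithinAt
    · intro s hs
      rw [interior_Icc] at hs
      obtain ⟨hs0, hsa⟩ := hs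
      have hns : (0:ℝ) < n - s := by linarith
      have hnps : (0:ℝ) < n + s := by linarith
      have hlb : Real.log ((n - s) / n) ≤ (n - s) / n - 1 :=
        Real.log_le_sub_one_of_pos (by positivity)
      rw [Real.log_div hns.ne' (by linarith : n ≠ 0)] at hlb
      have e1 : n * (n + s)⁻¹ - 1 + (1 - (n - s) / n) = s ^ 2 / ((n + s) * n) := by
        field_simp
        ring
      have e2 : (0:ℝ) ≤ s ^ 2 / ((n + s) * n) := by positivity
      linarith
  have h0a : (0:ℝ) ∈ Set.Icc (0:ℝ) a := by constructor <;> linarith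
  have haa : a ∈ Set.Icc (0:ℝ) a := by constructor <;> linarith
  have := hmono h0a haa h0
  simp only [add_zero, sub_zero, mul_zero] at this
  linarith

/-- Key strict inequality. -/
lemma key_strict (n A : ℝ) (hn : 1 ≤ n) (hA : 0 < A) (hAn : A ≤ n) :
    A * (f (n + A + 1) - f (n + A) - f (n + 1) + f n) < f (n + A) + f (n - A) - 2 * f n := by
  have hn0 : (0:ℝ) < n := by linarith
  have hmemn : n ∈ Set.Ioi (0:ℝ) := hn0
  have hmemna : n + A ∈ Set.Ioi (0:ℝ) := by simp only [Set.mem_Ioi]; linarith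
  have hD := D_strictAnti hmemn hmemna (by linarith : n < n + A)
  simp only at hD
  have hpsi := psi_nonneg n A hn hA.le hAn
  simp only [f]
  have hb : (n + A + 1) * Real.log (n + A + 1) - (n + A) * Real.log (n + A) -
      (n + 1) * Real.log (n + 1) + n * Real.log n < Real.log (n + A) - Real.log n := by
    nlinarith [hD]
  have hmul := mul_lt_mul_of_pos_left hb hA
  nlinarith [hmul, hpsi]

lemma key_le (n A : ℝ) (hn : 1 ≤ n) (hA : 0 ≤ A) (hAn : A ≤ n) :
    A * (f (n + A + 1) - f (n + A) - f (n + 1) + f n) ≤ f (n + A) + f (n - A) - 2 * f n := by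
  rcases hA.eq_or_lt with h | h
  · rw [← h]
    simp only [add_zero, sub_zero, zero_mul]
    linarith
  · exact (key_strict n A hn h hAn).le

theorem base_case_comparison (k a : ℕ) (hk : 3 ≤ k) (ha : a ≤ k - 2) :
    (((k : ℝ) - 2) * f ((k : ℝ) + a - 1) + ((a : ℝ) + 2) * f ((k : ℝ) - 2) ≤
      ((k : ℝ) - 2 - a) * f ((k : ℝ) + a - 1) + ((a : ℝ) + 1) * f ((k : ℝ) - 2 + a) +
        a * f ((k : ℝ) - 1) + f ((k : ℝ) - 2 - a)) ∧
    ((a : ℝ) * (f ((k : ℝ) + a - 1) - f ((k : ℝ) + a - 2) - f ((k : ℝ) - 1) + f ((k : ℝ) - 2)) ≤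
      f ((k : ℝ) - 2 + a) + f ((k : ℝ) - 2 - a) - 2 * f ((k : ℝ) - 2)) ∧
    (0 < a →
      ((k : ℝ) - 2) * f ((k : ℝ) + a - 1) + ((a : ℝ) + 2) * f ((k : ℝ) - 2) <
        ((k : ℝ) - 2 - a) * f ((k : ℝ) + a - 1) + ((a : ℝ) + 1) * f ((k : ℝ) - 2 + a) +
          a * f ((k : ℝ) - 1) + f ((k : ℝ) - 2 - a)) ∧
    (0 < a →
      (a : ℝ) * (f ((k : ℝ) + a - 1) - f ((k : ℝ) + a - 2) - f ((k : ℝ) - 1) + f ((k : ℝ) - 2)) <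
        f ((k : ℝ) - 2 + a) + f ((k : ℝ) - 2 - a) - 2 * f ((k : ℝ) - 2)) := by
  have hk3 : (3:ℝ) ≤ (k:ℝ) := by exact_mod_cast hk
  have hn : (1:ℝ) ≤ (k:ℝ) - 2 := by linarith
  have hA0 : (0:ℝ) ≤ (a:ℝ) := Nat.cast_nonneg a
  have hAn : (a:ℝ) ≤ (k:ℝ) - 2 := by
    have h2 : (2:ℕ) ≤ k := by omega
    have : (a:ℝ) ≤ ((k - 2 : ℕ) : ℝ) := by exact_mod_cast ha
    rwa [Nat.cast_sub h2] at this
  have hE1 : f ((k:ℝ) + a - 1) = f ((k:ℝ) - 2 + a + 1) := congrArg f (by ring)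
  have hE2 : f ((k:ℝ) + a - 2) = f ((k:ℝ) - 2 + a) := congrArg f (by ring)
  have hE3 : f ((k:ℝ) - 1) = f ((k:ℝ) - 2 + 1) := congrArg f (by ring)
  have hle : (a : ℝ) * (f ((k : ℝ) + a - 1) - f ((k : ℝ) + a - 2) - f ((k : ℝ) - 1)
      + f ((k : ℝ) - 2)) ≤ f ((k : ℝ) - 2 + a) + f ((k : ℝ) - 2 - a) - 2 * f ((k : ℝ) - 2) := by
    rw [hE1, hE2, hE3]
    exact key_le ((k:ℝ) - 2) (a:ℝ) hn hA0 hAn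
  have hlt : 0 < a → (a : ℝ) * (f ((k : ℝ) + a - 1) - f ((k : ℝ) + a - 2) - f ((k : ℝ) - 1)
      + f ((k : ℝ) - 2)) < f ((k : ℝ) - 2 + a) + f ((k : ℝ) - 2 - a) - 2 * f ((k : ℝ) - 2) := by
    intro hapos
    rw [hE1, hE2, hE3]
    exact key_strict ((k:ℝ) - 2) (a:ℝ) hn (by exact_mod_cast hapos) hAn
  refine ⟨?_, hle, fun h => ?_, hlt⟩
  · have h' := sub_nonneg.mpr hle
    rw [hE2] at h'
    rw [← sub_nonneg]
    convert h' using 1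
    ring
  · have h' := sub_pos.mpr (hlt h)
    rw [hE2] at h'
    rw [← sub_pos]
    convert h' using 1
    ring
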